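/- The function d-bar_D(x) = min_{s != y} (f_y(x) - f_s(x)) / ||V_y - V_s||_q, defined for an affine classifier f(z) = Vz + a, is nonnegative if and only if x is classified as class y (i.e. f_y(x) >= f_s(x) for all s != y), and is 1-Lipschitz with respect to the l_p-norm on R^d. -/

import Mathlib

open scoped BigOperators ENNReal

/-- The `l_p` norm of a vector in `ℝ^d`. -/
noncomputable def pnorm (p : ℝ≥0∞) {d : ℕ} (x : Fin d → ℝ) : ℝ :=
  ‖(WithLp.equiv p (Fin d → ℝ)).symm x‖

/-- Standard inner product on `ℝ^d`. -/
noncomputable def dotp {d : ℕ} (w x : Fin d → ℝ) : ℝ := ∑ i, w i * x i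


lemma pnorm_eq_sum {p : ℝ≥0∞} (hp : 0 < p.toReal) {d : ℕ} (x : Fin d → ℝ) :
    pnorm p x = (∑ i, |x i| ^ p.toReal) ^ (1 / p.toReal) := by
  rw [pnorm, PiLp.norm_eq_sum hp]
  simp [Real.norm_eq_abs]

lemma pnorm_eq_ciSup {d : ℕ} (x : Fin d → ℝ) :
    pnorm ∞ x = ⨆ i, |x i| := by
  rw [pnorm, PiLp.norm_eq_ciSup]
  simp [Real.norm_eq_abs]

lemma sum_mul_le_one_inf {d : ℕ} (w z : Fin d → ℝ) :
    ∑ i, |w i| * |z i| ≤ (∑ i, |w i|) * ⨆ i, |z i| := by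
  rw [Finset.sum_mul]
  refine Finset.sum_le_sum fun i _ => ?_
  refine mul_le_mul_of_nonneg_left ?_ (abs_nonneg _)
  exact le_ciSup (f := fun j => |z j|) (Set.Finite.bddAbove (Set.finite_range _)) i

lemma holder {p q : ℝ≥0∞} (h : p.HolderConjugate q) {d : ℕ} (w z : Fin d → ℝ) :
    |dotp w z| ≤ pnorm q w * pnorm p z := by
  have habs : |dotp w z| ≤ ∑ i, |w i| * |z i| := by
    rw [dotp]
    exact (Finset.abs_sum_le_sum_abs _ _).trans (le_of_eq (by simp [abs_mul]))
  rcases eq_or_ne p 1 with rfl | hp1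
  · -- q = ∞
    have hq : q = ∞ := by
      have h1 : (1:ℝ≥0∞) + q⁻¹ = 1 + 0 := by
        simpa using ENNReal.holderConjugate_iff.mp h
      have h2 : q⁻¹ = 0 :=
        (ENNReal.add_right_inj (a := (1:ℝ≥0∞)) (by simp)).mp h1
      simpa [ENNReal.inv_eq_zero] using h2
    subst hq
    rw [pnorm_eq_ciSup, pnorm_eq_sum (by norm_num)]
    simp only [ENNReal.toReal_one, Real.rpow_one, one_div_one]
    refine habs.trans ?_
    calc ∑ i, |w i| * |z i| ≤ ∑ i, (⨆ j, |w j|) * |z i| := by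
          refine Finset.sum_le_sum fun i _ => ?_
          exact mul_le_mul_of_nonneg_right
            (le_ciSup (f := fun j => |w j|) (Set.Finite.bddAbove (Set.finite_range _)) i)
            (abs_nonneg _)
      _ = (⨆ j, |w j|) * ∑ i, |z i| := by rw [Finset.mul_sum]
  rcases eq_or_ne p ∞ with rfl | hptop
  · -- q = 1
    have hq : q = 1 := by
      have := ENNReal.holderConjugate_iff.mp h
      simp at this
      exact this
    subst hq
    rw [pnorm_eq_ciSup, pnorm_eq_sum (by norm_num)]
    simp only [ENNReal.toReal_one, Real.rpow_one, one_div_one]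
    refine habs.trans ?_
    exact sum_mul_le_one_inf w z
  -- middle case
  have hq1 : q ≠ ∞ := by
    rintro rfl
    have := ENNReal.holderConjugate_iff.mp h
    simp at this
    exact hp1 (by simpa [ENNReal.inv_eq_one] using this)
  have hppos : p ≠ 0 := (haveI := h; ENNReal.HolderConjugate.ne_zero p q)
  have hqpos : q ≠ 0 := (haveI := h; ENNReal.HolderConjugate.ne_zero q p)
  have hpt : 1 < p.toReal := by
    rw [← ENNReal.toReal_one]
    exact ENNReal.toReal_strict_mono hptop (lt_of_le_of_ne (haveI := h; ENNReal.HolderConjugate.one_le p q) (Ne.symm hp1))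
  have hconj : (p.toReal).HolderConjugate (q.toReal) := by
    rw [Real.holderConjugate_iff]
    constructor
    · exact hpt
    · have := ENNReal.holderConjugate_iff.mp h
      have h2 : (p⁻¹ + q⁻¹).toReal = (1 : ℝ≥0∞).toReal := by rw [this]
      rwa [ENNReal.toReal_add (by simp [hppos]) (by simp [hqpos]), ENNReal.toReal_inv,
        ENNReal.toReal_inv, ENNReal.toReal_one] at h2
  rw [pnorm_eq_sum hconj.symm.pos, pnorm_eq_sum hconj.pos]
  refine habs.trans ?_
  have := Real.inner_le_Lp_mul_Lq (s := Finset.univ) (fun i => |z i|) (fun i => |w i|) hconj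
  simp only [abs_abs] at this
  calc ∑ i, |w i| * |z i| = ∑ i, |z i| * |w i| := by simp [mul_comm]
    _ ≤ (∑ i, |z i| ^ p.toReal) ^ (1 / p.toReal) * (∑ i, |w i| ^ q.toReal) ^ (1 / q.toReal) := this
    _ = _ := mul_comm _ _

/-- The signed margin d̄_D is nonnegative iff x is classified as y, and is
1-Lipschitz with respect to the l_p-norm. -/
theorem stmt10 {d K : ℕ} (p q : ℝ≥0∞) (hp : 1 ≤ p) (hpq : 1/p + 1/q = 1)
    (V : Fin K → Fin d → ℝ) (a : Fin K → ℝ) (y : Fin K)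
    (hV : ∀ s : Fin K, s ≠ y → V y ≠ V s) (hK : ∃ s : Fin K, s ≠ y)
    (dD : (Fin d → ℝ) → ℝ)
    (hdD : ∀ x, dD x = sInf {r : ℝ | ∃ s : Fin K, s ≠ y ∧
        r = ((dotp (V y) x + a y) - (dotp (V s) x + a s)) / pnorm q (V y - V s)}) :
    (∀ x : Fin d → ℝ,
      0 ≤ dD x ↔ ∀ s : Fin K, s ≠ y → dotp (V s) x + a s ≤ dotp (V y) x + a y) ∧
    (∀ x x' : Fin d → ℝ, |dD x - dD x'| ≤ pnorm p (x - x')) := by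
  have hconj : p.HolderConjugate q := ⟨by simpa [one_div] using hpq⟩
  haveI : Fact (1 ≤ p) := ⟨hp⟩
  haveI : Fact (1 ≤ q) := ⟨(haveI := hconj; ENNReal.HolderConjugate.one_le q p)⟩
  set g : (Fin d → ℝ) → Fin K → ℝ := fun x s =>
    ((dotp (V y) x + a y) - (dotp (V s) x + a s)) / pnorm q (V y - V s) with hg
  set S : (Fin d → ℝ) → Set ℝ := fun x => {r : ℝ | ∃ s : Fin K, s ≠ y ∧ r = g x s} with hS
  have hdD' : ∀ x, dD x = sInf (S x) := hdD
  have hfin : ∀ x, (S x).Finite := by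
    intro x
    have : S x ⊆ Set.range (g x) := by rintro r ⟨s, _, rfl⟩; exact ⟨s, rfl⟩
    exact (Set.finite_range (g x)).subset this
  have hne : ∀ x, (S x).Nonempty := by
    intro x
    obtain ⟨s, hs⟩ := hK
    exact ⟨g x s, s, hs, rfl⟩
  have hpos : ∀ s : Fin K, s ≠ y → 0 < pnorm q (V y - V s) := by
    intro s hs
    have hne0 : V y - V s ≠ 0 := sub_ne_zero.mpr (hV s hs)
    rw [pnorm, norm_pos_iff]
    intro hc
    apply hne0
    funext i
    have := congrFun (congrArg WithLp.ofLp hc) i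
    simpa [PiLp.toLp_apply] using this
  constructor
  · intro x
    rw [hdD' x]
    constructor
    · intro h0 s hs
      have h1 : sInf (S x) ≤ g x s := csInf_le (hfin x).bddBelow ⟨s, hs, rfl⟩
      have h2 : 0 ≤ g x s := le_trans h0 h1
      rw [hg, le_div_iff₀ (hpos s hs)] at h2
      simpa using by linarith [h2]
    · intro hle
      refine le_csInf (hne x) ?_
      rintro r ⟨s, hs, rfl⟩
      exact div_nonneg (by linarith [hle s hs]) (hpos s hs).le
  · -- Lipschitz
    have hdiff : ∀ (x x' : Fin d → ℝ) (s : Fin K),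
        g x s - g x' s = dotp (V y - V s) (x - x') / pnorm q (V y - V s) := by
      intro x x' s
      rw [hg, div_sub_div_same]
      congr 1
      simp only [dotp, Pi.sub_apply, sub_mul, mul_sub, Finset.sum_sub_distrib]
      ring
    have key : ∀ (x x' : Fin d → ℝ) (s : Fin K), s ≠ y →
        g x s - g x' s ≤ pnorm p (x - x') := by
      intro x x' s hs
      rw [hdiff, div_le_iff₀ (hpos s hs)]
      calc dotp (V y - V s) (x - x') ≤ |dotp (V y - V s) (x - x')| := le_abs_self _
        _ ≤ pnorm q (V y - V s) * pnorm p (x - x') := holder hconj _ _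
        _ = pnorm p (x - x') * pnorm q (V y - V s) := mul_comm _ _
    have main : ∀ (x x' : Fin d → ℝ), dD x - dD x' ≤ pnorm p (x - x') := by
      intro x x'
      rw [hdD' x, hdD' x', sub_le_iff_le_add, ← sub_le_iff_le_add']
      refine le_csInf (hne x') ?_
      rintro r ⟨s, hs, rfl⟩
      have h1 : sInf (S x) ≤ g x s := csInf_le (hfin x).bddBelow ⟨s, hs, rfl⟩
      linarith [key x x' s hs]
    intro x x'
    have hsymm : pnorm p (x' - x) = pnorm p (x - x') := by
      rw [pnorm, pnorm, ← norm_neg]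
      congr 1
      simp [neg_sub]
    exact abs_sub_le_iff.mpr ⟨main x x', hsymm ▸ main x' x⟩
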